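/- Consider N point particles on a circle of circumference L, with coordinates 0 = x_0 < x_1 < ... < x_{N-1} < L extended periodically to the real line by x_{k+N} = x_k + L, interacting with nearest neighbors through potential energy U = (ω²/2) Σ_k (x_k − x_{k−1} − a)² where a = L/N, with a constant external force f > 0 acting on particle 0 (and each of its periodic copies kN) and a constant force −φ (φ > 0) acting on every particle. Write x_k − x_{k−1} = L/N + ε_k/N². Then an equilibrium configuration (one in which the total force on every particle is zero) satisfying the strict ordering exists if and only if both (1) φ = f/N and (2) f/(2ω²L) < 1/(N(1 − 1/N)). In that case the equilibrium is unique and is given by ε_k = −fN(N−1)/(2ω²) + (k−1)fN/ω² for k = 1, ..., N−1 and ε_N = fN(N−1)/(2ω²). -/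

import Mathlib

open Filter Topology

section Aux

open Finset

private lemma periodic_zero' (N : ℕ) (hN : 0 < N) (F : ℤ → ℝ)
    (hper : ∀ k : ℤ, F (k + N) = F k)
    (hz : ∀ r : ℤ, 1 ≤ r → r ≤ N → F r = 0) : ∀ k : ℤ, F k = 0 := by
  have hshift : ∀ m : ℤ, ∀ k : ℤ, F (k + N * m) = F k := by
    intro m
    induction m using Int.induction_on with
    | zero => simp
    | succ n ih => intro k; have := hper (k + N * n)
                   have h2 : k + (N:ℤ) * (n + 1) = k + N * n + N := by ring
                   rw [h2, this, ih]
    | pred n ih => intro k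
                   have := hper (k + N * (-n - 1))
                   have h2 : k + (N:ℤ) * (-n - 1) + N = k + N * (-(n:ℤ)) := by ring
                   rw [h2] at this
                   rw [← this, ih]
  intro k
  have hk : k = k % N + N * (k / N) := (Int.emod_add_mul_ediv k N).symm
  have h1 : F k = F (k % N) := by conv_lhs => rw [hk, hshift]
  have hNpos : (0:ℤ) < N := by exact_mod_cast hN
  have h0 : 0 ≤ k % N := Int.emod_nonneg k (by positivity)
  have h2 : k % N < N := Int.emod_lt_of_pos k hNpos
  rcases eq_or_lt_of_le h0 with h | h
  · rw [h1, ← h]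
    have := hper 0
    rw [zero_add] at this
    rw [← this]
    exact hz N hNpos le_rfl
  · exact h1.trans (hz _ h h2.le)

private lemma equil_analysis' (N : ℕ) (hN : 2 ≤ N) (L ω f φ : ℝ)
    (hω : 0 < ω) (x : ℤ → ℝ)
    (hx0 : x 0 = 0) (hxper : ∀ k : ℤ, x (k + N) = x k + L)
    (he : ∀ k : ℤ,
      ω ^ 2 * (x (k + 1) - x k - L / N) - ω ^ 2 * (x k - x (k - 1) - L / N)
        + (if (N : ℤ) ∣ k then f else 0) - φ = 0) :
    φ = f / N ∧
    ∀ r : ℤ, 1 ≤ r → r ≤ N →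
      x r - x (r - 1) - L / N
        = f / (N * ω ^ 2) * (r - 1) - f * (N - 1) / (2 * N * ω ^ 2) := by
  have hNR : (0:ℝ) < (N:ℝ) := by
    have : (0:ℕ) < N := by omega
    exact_mod_cast this
  have hω2 : (ω:ℝ) ^ 2 ≠ 0 := by positivity
  set d : ℤ → ℝ := fun k => x k - x (k - 1) - L / N with hd
  have hrec : ∀ k : ℤ, ω ^ 2 * (d (k + 1) - d k)
      = φ - (if (N : ℤ) ∣ k then f else 0) := by
    intro k
    have := he k
    have h1 : d (k + 1) = x (k + 1) - x k - L / N := by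
      simp only [hd, add_sub_cancel_right]
    rw [h1]; simp only [hd]; linarith
  have hdper : ∀ k : ℤ, d (k + N) = d k := by
    intro k
    simp only [hd]
    have h1 : (k : ℤ) + N - 1 = (k - 1) + N := by ring
    rw [h1, hxper, hxper]; ring
  set D : ℕ → ℝ := fun n => d n with hD
  have htel : ∑ i ∈ range N, (D (i + 1) - D i) = D N - D 0 :=
    Finset.sum_range_sub D N
  have hD0 : D N = D 0 := by
    have := hdper 0
    simpa [hD] using this
  have hterm : ∀ i : ℕ, ω ^ 2 * (D (i + 1) - D i)
      = φ - (if (N : ℤ) ∣ (i : ℤ) then f else 0) := by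
    intro i
    have := hrec (i : ℤ)
    simp only [hD]
    convert this using 3 <;> push_cast <;> ring
  have hite : ∑ i ∈ range N, (if (N : ℤ) ∣ (i : ℤ) then f else 0) = f := by
    rw [Finset.sum_eq_single_of_mem 0 (Finset.mem_range.mpr (by omega))]
    · simp
    · intro b hb hb0
      rw [if_neg]
      intro hdvd
      have : N ∣ b := by exact_mod_cast hdvd
      have := Nat.le_of_dvd (by omega) this
      have := Finset.mem_range.mp hb
      omega
  have hphi : φ = f / N := by
    have h1 : ∑ i ∈ range N, (ω ^ 2 * (D (i + 1) - D i)) = 0 := by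
      rw [← Finset.mul_sum, htel, hD0]; ring
    have h2 : ∑ i ∈ range N, (φ - (if (N : ℤ) ∣ (i : ℤ) then f else 0))
        = ∑ i ∈ range N, (ω ^ 2 * (D (i + 1) - D i)) :=
      Finset.sum_congr rfl fun i _ => (hterm i).symm
    rw [h1, Finset.sum_sub_distrib, hite, Finset.sum_const, Finset.card_range,
      nsmul_eq_mul] at h2
    have : (N : ℝ) * φ - f = 0 := by linarith
    field_simp
    linarith
  refine ⟨hphi, ?_⟩
  set g : ℝ := f / (N * ω ^ 2) with hg
  have hstep : ∀ j : ℕ, 1 ≤ j → j < N → d ((j : ℤ) + 1) = d j + g := by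
    intro j hj1 hjN
    have h := hrec (j : ℤ)
    rw [if_neg, hphi] at h
    · have : d ((j:ℤ) + 1) - d j = f / N / ω ^ 2 := by
        field_simp at h ⊢; linarith
      rw [hg]; rw [div_div] at this; linarith
    · intro hdvd
      have : N ∣ j := by exact_mod_cast hdvd
      have := Nat.le_of_dvd (by omega) this
      omega
  have hform : ∀ j : ℕ, 1 ≤ j → j ≤ N → d j = d 1 + ((j : ℝ) - 1) * g := by
    intro j
    induction j with
    | zero => omega
    | succ n ih =>
      intro _ hn1
      rcases Nat.eq_zero_or_pos n with h0 | hpos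
      · subst h0; simp
      · have h1 : d ((n:ℤ) + 1) = d n + g := hstep n hpos (by omega)
        have h2 := ih hpos (by omega)
        push_cast
        rw [show ((n:ℤ) + 1 : ℤ) = ((n + 1 : ℕ) : ℤ) by push_cast; ring] at h1
        push_cast at h1
        rw [h1, h2]; ring
  set G : ℕ → ℝ := fun n => x n - n * (L / N) with hG
  have htel2 : ∑ i ∈ range N, (G (i + 1) - G i) = G N - G 0 :=
    Finset.sum_range_sub G N
  have hGterm : ∀ i : ℕ, G (i + 1) - G i = d ((i : ℤ) + 1) := by
    intro i
    simp only [hG, hd, add_sub_cancel_right]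
    push_cast
    ring
  have hxN : x (N : ℤ) = L := by
    have := hxper 0
    rw [zero_add] at this
    rw [this, hx0, zero_add]
  have hsum2 : ∑ i ∈ range N, d ((i : ℤ) + 1) = 0 := by
    rw [← Finset.sum_congr rfl fun i _ => hGterm i, htel2]
    simp only [hG, hxN, hx0, Nat.cast_zero]
    field_simp
    ring
  have hgauss : (∑ i ∈ range N, (i : ℝ)) * 2 = N * (N - 1) := by
    have h := Finset.sum_range_id_mul_two N
    have : ((∑ i ∈ range N, i : ℕ) : ℝ) * 2 = (N : ℝ) * ((N - 1 : ℕ) : ℝ) := by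
      exact_mod_cast congrArg (Nat.cast : ℕ → ℝ) h
    rw [Nat.cast_sub (by omega)] at this
    push_cast at this ⊢
    linarith
  have hd1 : d 1 = -(g * ((N:ℝ) - 1)) / 2 := by
    have h1 : ∑ i ∈ range N, d ((i:ℤ) + 1)
        = ∑ i ∈ range N, (d 1 + (i : ℝ) * g) := by
      refine Finset.sum_congr rfl fun i hi => ?_
      have hi' := Finset.mem_range.mp hi
      have := hform (i + 1) (by omega) (by omega)
      rw [show ((i + 1 : ℕ) : ℤ) = (i:ℤ) + 1 by push_cast; ring] at this
      rw [this]; push_cast; ring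
    rw [h1, Finset.sum_add_distrib, Finset.sum_const, Finset.card_range,
      nsmul_eq_mul, ← Finset.sum_mul] at hsum2
    have h2 : (N:ℝ) * d 1 + (N * (N - 1) / 2) * g = 0 := by
      linear_combination hsum2 - (g / 2) * hgauss
    field_simp at h2 ⊢
    nlinarith [h2]
  intro r hr1 hrN
  obtain ⟨n, rfl⟩ := Int.eq_ofNat_of_zero_le (by linarith : (0:ℤ) ≤ r)
  have hn1 : 1 ≤ n := by exact_mod_cast hr1
  have hnN : n ≤ N := by exact_mod_cast hrN
  have := hform n hn1 hnN
  show d n = _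
  rw [this, hd1, hg]
  push_cast
  field_simp
  ring

private lemma construct_gap' (N : ℕ) (hN : 2 ≤ N) (L ω f : ℝ) (hω : 0 < ω)
    (k : ℤ) :
    (fun k : ℤ => ((k / N : ℤ) : ℝ) * L + ((k % N : ℤ) : ℝ) * (L / N)
      + (f / (2 * N * ω ^ 2)) * ((k % N : ℤ) : ℝ) * (((k % N : ℤ) : ℝ) - N)) k
    - (fun k : ℤ => ((k / N : ℤ) : ℝ) * L + ((k % N : ℤ) : ℝ) * (L / N)
      + (f / (2 * N * ω ^ 2)) * ((k % N : ℤ) : ℝ) * (((k % N : ℤ) : ℝ) - N)) (k - 1)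
    = L / N + (f / (N * ω ^ 2)) * (((k - 1) % N : ℤ) : ℝ)
      - (f / (N * ω ^ 2)) * ((N : ℝ) - 1) / 2 := by
  have hNZ : (N : ℤ) ≠ 0 := by positivity
  have hNpos : (0 : ℤ) < N := by positivity
  have hNR : (0:ℝ) < (N:ℝ) := by exact_mod_cast hNpos
  set s : ℤ := (k - 1) % N with hs
  set q : ℤ := (k - 1) / N with hq
  have hs0 : 0 ≤ s := Int.emod_nonneg _ hNZ
  have hsN : s < N := Int.emod_lt_of_pos _ hNpos
  have hk : k = s + 1 + N * q := by
    have h := Int.emod_add_mul_ediv (k - 1) N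
    rw [← hs, ← hq] at h
    omega
  rcases lt_or_eq_of_le (by omega : s + 1 ≤ N) with hlt | heq
  · have h1 : k % N = s + 1 := by
      rw [hk, Int.add_mul_emod_self_left, Int.emod_eq_of_lt (by omega) hlt]
    have h2 : k / N = q := by
      rw [hk, Int.add_mul_ediv_left _ _ hNZ, Int.ediv_eq_zero_of_lt (by omega) hlt,
        zero_add]
    simp only [h1, h2, ← hs, ← hq]
    push_cast
    field_simp
    ring
  · have h1 : k % N = 0 := by
      rw [hk, heq]
      simp [Int.add_mul_emod_self_left]
    have h2 : k / N = q + 1 := by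
      rw [hk, heq]
      rw [show (N:ℤ) + N * q = 0 + N * (q + 1) by ring, Int.add_mul_ediv_left _ _ hNZ]
      simp
    have hsval : (s : ℝ) = (N : ℝ) - 1 := by
      have : s = (N:ℤ) - 1 := by omega
      rw [this]; push_cast; ring
    simp only [h1, h2, ← hs, ← hq, hsval]
    push_cast
    field_simp
    ring

private lemma construct_exists' (N : ℕ) (hN : 2 ≤ N) (L ω f : ℝ)
    (hL : 0 < L) (hω : 0 < ω) (hf : 0 < f)
    (hineq : f / (N * ω ^ 2) * ((N:ℝ) - 1) / 2 < L / N) :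
    ∃ x : ℤ → ℝ,
      (x 0 = 0 ∧ (∀ k : ℤ, x (k + N) = x k + L) ∧ (∀ k : ℤ, x k < x (k + 1))) ∧
      (∀ k : ℤ, ω ^ 2 * (x (k + 1) - x k - L / N) - ω ^ 2 * (x k - x (k - 1) - L / N)
        + (if (N : ℤ) ∣ k then f else 0) - f / N = 0) := by
  have hNZ : (N : ℤ) ≠ 0 := by positivity
  have hNpos : (0 : ℤ) < N := by positivity
  have hNR : (0:ℝ) < (N:ℝ) := by exact_mod_cast hNpos
  set g : ℝ := f / (N * ω ^ 2) with hg
  have hgpos : 0 < g := by rw [hg]; positivity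
  set x : ℤ → ℝ := fun k : ℤ => ((k / N : ℤ) : ℝ) * L + ((k % N : ℤ) : ℝ) * (L / N)
      + (f / (2 * N * ω ^ 2)) * ((k % N : ℤ) : ℝ) * (((k % N : ℤ) : ℝ) - N) with hx
  have hgap : ∀ k : ℤ, x k - x (k - 1)
      = L / N + g * (((k - 1) % N : ℤ) : ℝ) - g * ((N : ℝ) - 1) / 2 :=
    fun k => construct_gap' N hN L ω f hω k
  refine ⟨x, ⟨?_, ?_, ?_⟩, ?_⟩
  · simp [hx]
  · intro k
    have h1 : (k + (N:ℤ)) / N = k / N + 1 := by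
      rw [show k + (N:ℤ) = k + N * 1 by ring, Int.add_mul_ediv_left _ _ hNZ]
    have h2 : (k + (N:ℤ)) % N = k % N := by
      rw [show k + (N:ℤ) = k + N * 1 by ring, Int.add_mul_emod_self_left]
    simp only [hx, h1, h2]
    push_cast
    ring
  · intro k
    have h := hgap (k + 1)
    rw [add_sub_cancel_right] at h
    have h0 : (0:ℝ) ≤ ((k % N : ℤ) : ℝ) := by
      exact_mod_cast Int.emod_nonneg k hNZ
    have hmn : 0 ≤ g * ((k % (N:ℤ) : ℤ) : ℝ) := mul_nonneg hgpos.le h0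
    clear_value x g
    linarith [h, hineq, hmn]
  · intro k
    have hA := hgap (k + 1)
    rw [add_sub_cancel_right] at hA
    have hB := hgap k
    by_cases hdvd : (N : ℤ) ∣ k
    · have h1 : k % N = 0 := Int.emod_eq_zero_of_dvd hdvd
      have h2 : (k - 1) % N = N - 1 := by
        obtain ⟨m, rfl⟩ := hdvd
        have e1 : (N:ℤ) * m - 1 = (N - 1) + N * (m - 1) := by ring
        rw [e1, Int.add_mul_emod_self_left, Int.emod_eq_of_lt (by omega) (by omega)]
      rw [if_pos hdvd]
      rw [h1] at hA
      rw [h2] at hB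
      push_cast at hA hB
      rw [show x (k+1) - x k - L/N = (x (k+1) - x k) - L/N by ring, hA]
      rw [show x k - x (k-1) - L/N = (x k - x (k-1)) - L/N by ring, hB]
      rw [hg]
      field_simp
      ring
    · have h0 : k % N ≠ 0 := fun h => hdvd (Int.dvd_of_emod_eq_zero h)
      have h0' : 1 ≤ k % N := by
        have := Int.emod_nonneg k hNZ
        omega
      have h2 : (k - 1) % N = k % N - 1 := by
        rw [Int.sub_emod, Int.emod_eq_of_lt (by omega) (by omega : (1:ℤ) < N),
          Int.emod_eq_of_lt (by omega) (by
            have := Int.emod_lt_of_pos k hNpos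
            omega)]
      rw [if_neg hdvd]
      rw [h2] at hB
      rw [show x (k+1) - x k - L/N = (x (k+1) - x k) - L/N by ring, hA]
      rw [show x k - x (k-1) - L/N = (x k - x (k-1)) - L/N by ring, hB]
      push_cast
      rw [hg]
      field_simp
      ring

end Aux

/-- A configuration of `N` particles on a circle of circumference `L`, realized as a
bi-infinite strictly increasing sequence on the real line with `x 0 = 0` and
periodicity `x (k + N) = x k + L`. -/
def CircleConfig (N : ℕ) (L : ℝ) (x : ℤ → ℝ) : Prop :=
  x 0 = 0 ∧ (∀ k : ℤ, x (k + N) = x k + L) ∧ (∀ k : ℤ, x k < x (k + 1))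

/-- Equilibrium: the total force on every particle vanishes.  The forces are the harmonic
nearest-neighbor forces with frequency `ω` and natural spacing `a = L/N`, the constant
force `f` on every particle whose index is a multiple of `N`, and the constant force
`-φ` on every particle. -/
def CircleEquilibrium (N : ℕ) (L ω f φ : ℝ) (x : ℤ → ℝ) : Prop :=
  ∀ k : ℤ,
    ω ^ 2 * (x (k + 1) - x k - L / N) - ω ^ 2 * (x k - x (k - 1) - L / N)
      + (if (N : ℤ) ∣ k then f else 0) - φ = 0

theorem stmt0 (N : ℕ) (hN : 2 ≤ N) (L ω f φ : ℝ)
    (hL : 0 < L) (hω : 0 < ω) (hf : 0 < f) (hφ : 0 < φ) :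
    -- existence of an equilibrium configuration iff the two conditions hold
    ((∃ x : ℤ → ℝ, CircleConfig N L x ∧ CircleEquilibrium N L ω f φ x) ↔
      (φ = f / N ∧ f / (2 * ω ^ 2 * L) < 1 / (N * (1 - 1 / N)))) ∧
    -- uniqueness
    (∀ x y : ℤ → ℝ, CircleConfig N L x → CircleEquilibrium N L ω f φ x →
      CircleConfig N L y → CircleEquilibrium N L ω f φ y → x = y) ∧
    -- explicit form of the deviations ε_k, where x k - x (k-1) = L/N + ε_k/N²
    (∀ x : ℤ → ℝ, CircleConfig N L x → CircleEquilibrium N L ω f φ x →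
      (∀ k : ℕ, 1 ≤ k → k < N →
        (x (k : ℤ) - x ((k : ℤ) - 1) - L / N) * (N : ℝ) ^ 2 =
          -(f * N * (N - 1)) / (2 * ω ^ 2) + ((k : ℝ) - 1) * (f * N / ω ^ 2)) ∧
      (x (N : ℤ) - x ((N : ℤ) - 1) - L / N) * (N : ℝ) ^ 2 =
        f * N * (N - 1) / (2 * ω ^ 2)) := by
  have hNR : (0:ℝ) < (N:ℝ) := by
    have : (0:ℕ) < N := by omega
    exact_mod_cast this
  have hN1 : (1:ℝ) < (N:ℝ) := by
    have : (1:ℕ) < N := by omega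
    exact_mod_cast this
  have hkey : (N:ℝ) * (1 - 1 / N) = (N:ℝ) - 1 := by
    field_simp
  refine ⟨⟨?_, ?_⟩, ?_, ?_⟩
  · -- forward direction
    rintro ⟨x, ⟨hx0, hxper, hmono⟩, he⟩
    obtain ⟨hphi, hform⟩ := equil_analysis' N hN L ω f φ hω x hx0 hxper he
    refine ⟨hphi, ?_⟩
    have h1 := hform 1 le_rfl (by exact_mod_cast (by omega : 1 ≤ N))
    have hm := hmono 0
    rw [zero_add, hx0] at hm
    have hd1 : x 1 - x 0 - L / N
        = - (f * ((N:ℝ) - 1) / (2 * N * ω ^ 2)) := by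
      rw [show (1:ℤ) - 1 = 0 by ring] at h1
      rw [h1]; push_cast; ring
    rw [hx0, sub_zero] at hd1
    -- so f (N-1) / (2 N ω²) < L / N
    have h2 : f * ((N:ℝ) - 1) / (2 * N * ω ^ 2) < L / N := by
      have : x 1 - L / N = - (f * ((N:ℝ) - 1) / (2 * N * ω ^ 2)) := hd1
      linarith [hm, this]
    rw [hkey]
    rw [div_lt_div_iff₀ (by positivity) (by linarith)] at h2 ⊢
    nlinarith [h2, sq_nonneg ω, hNR]
  · -- reverse : construction
    rintro ⟨hphi, hineq⟩
    rw [hkey] at hineq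
    rw [div_lt_div_iff₀ (by positivity) (by linarith)] at hineq
    have hineq' : f / (N * ω ^ 2) * ((N:ℝ) - 1) / 2 < L / N := by
      rw [div_mul_eq_mul_div, div_div,
        div_lt_div_iff₀ (by positivity : (0:ℝ) < (N:ℝ) * ω ^ 2 * 2) hNR]
      nlinarith [mul_lt_mul_of_pos_left hineq hNR]
    obtain ⟨x, hconf, he⟩ := construct_exists' N hN L ω f hL hω hf hineq'
    exact ⟨x, hconf, by rw [hphi] at *; exact he⟩
  · -- uniqueness
    rintro x y ⟨hx0, hxper, _⟩ hex ⟨hy0, hyper, _⟩ hey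
    obtain ⟨hphix, hformx⟩ := equil_analysis' N hN L ω f φ hω x hx0 hxper hex
    obtain ⟨_, hformy⟩ := equil_analysis' N hN L ω f φ hω y hy0 hyper hey
    set F : ℤ → ℝ := fun k => (x k - x (k - 1)) - (y k - y (k - 1)) with hF
    have hFper : ∀ k : ℤ, F (k + N) = F k := by
      intro k
      simp only [hF]
      have h1 : (k : ℤ) + N - 1 = (k - 1) + N := by ring
      rw [h1, hxper, hxper, hyper, hyper]; ring
    have hFz : ∀ r : ℤ, 1 ≤ r → r ≤ N → F r = 0 := by
      intro r h1 h2
      have hx' := hformx r h1 h2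
      have hy' := hformy r h1 h2
      simp only [hF]
      linarith
    have hFall := periodic_zero' N (by omega) F hFper hFz
    funext k
    induction k using Int.induction_on with
    | zero => rw [hx0, hy0]
    | succ n ih =>
      have := hFall ((n:ℤ) + 1)
      simp only [hF, add_sub_cancel_right] at this
      linarith [ih, this]
    | pred n ih =>
      have := hFall (-(n:ℤ))
      simp only [hF] at this
      have e : -(n:ℤ) - 1 = -((n:ℤ)) - 1 := rfl
      rw [e] at this
      linarith [ih, this]
  · -- explicit deviations
    rintro x ⟨hx0, hxper, _⟩ he
    obtain ⟨_, hform⟩ := equil_analysis' N hN L ω f φ hω x hx0 hxper he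
    constructor
    · intro k hk1 hkN
      have h := hform (k : ℤ) (by exact_mod_cast hk1) (by exact_mod_cast (by omega : k ≤ N))
      rw [h]
      push_cast
      field_simp
      ring
    · have h := hform (N : ℤ) (by exact_mod_cast (by omega : 1 ≤ N)) le_rfl
      rw [h]
      push_cast
      field_simp
      ring
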